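/- Let T be a bounded linear operator on a complex Hilbert space H. Then w(T) ≤ log((1/2)e^{‖T‖} + (1/2)e^{‖T²‖^{1/2}}) ≤ ‖T‖. -/

import Mathlib

open scoped InnerProductSpace
open Set Filter

variable {H : Type*} [NormedAddCommGroup H] [InnerProductSpace ℂ H] [CompleteSpace H]

/-- The numerical radius of a bounded linear operator. -/
noncomputable def numRad (T : H →L[ℂ] H) : ℝ :=
  ⨆ x : {x : H // ‖x‖ = 1}, ‖(⟪T x, x⟫_ℂ)‖

/-- The absolute value `|T| = (T*T)^(1/2)` of a bounded linear operator. -/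
noncomputable def opAbs (T : H →L[ℂ] H) : H →L[ℂ] H := CFC.sqrt (star T * T)

namespace KittanehAux

variable (T : H →L[ℂ] H)

/-- word: product of `T * star T` / `star T * T` factors. -/
noncomputable def W : List Bool → (H →L[ℂ] H)
  | [] => 1
  | (x :: l) => (if x then T * star T else star T * T) * W l

/-- half-shifted word -/
noncomputable def V : Bool → List Bool → (H →L[ℂ] H)
  | true, l => star T * W T l
  | false, l => T * W T l

/-- numeric bound for `V`. -/
noncomputable def C : Bool → List Bool → ℝ
  | _, [] => ‖T‖
  | x, (y :: l) => (if x = y then ‖T‖ ^ 2 else ‖T * T‖) * C y l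

lemma norm_V_le : ∀ (l : List Bool) (x : Bool), ‖V T x l‖ ≤ C T x l := by
  intro l
  induction l with
  | nil =>
    intro x
    cases x <;> simp [V, W, C, mul_one] <;> simpa using norm_star T |>.le
  | cons y t ih =>
    intro x
    have hA : ‖T * star T‖ ≤ ‖T‖ ^ 2 := by
      calc ‖T * star T‖ ≤ ‖T‖ * ‖star T‖ := norm_mul_le _ _
      _ = ‖T‖ ^ 2 := by rw [norm_star]; ring
    have hB : ‖star T * T‖ ≤ ‖T‖ ^ 2 := by
      calc ‖star T * T‖ ≤ ‖star T‖ * ‖T‖ := norm_mul_le _ _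
      _ = ‖T‖ ^ 2 := by rw [norm_star]; ring
    have hBB : ‖star T * star T‖ = ‖T * T‖ := by
      rw [← star_mul, norm_star]
    have hC : 0 ≤ C T y t := le_trans (norm_nonneg _) (ih y)
    cases x <;> cases y
    · -- x = false, y = false : V false (false::t) = (T * star T) * V false t
      have he : V T false (false :: t) = (T * star T) * V T false t := by
        simp [V, W, mul_assoc]
      rw [he]
      simp only [C, if_pos rfl]
      calc ‖(T * star T) * V T false t‖ ≤ ‖T * star T‖ * ‖V T false t‖ := norm_mul_le _ _
      _ ≤ ‖T‖ ^ 2 * C T false t := mul_le_mul hA (ih false) (norm_nonneg _) (by positivity)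
    · -- x = false, y = true : V false (true::t) = (T * T) * V true t
      have he : V T false (true :: t) = (T * T) * V T true t := by
        simp [V, W, mul_assoc]
      rw [he]
      simp only [C, if_neg (by simp : (false : Bool) ≠ true)]
      calc ‖(T * T) * V T true t‖ ≤ ‖T * T‖ * ‖V T true t‖ := norm_mul_le _ _
      _ ≤ ‖T * T‖ * C T true t := by
          exact mul_le_mul_of_nonneg_left (ih true) (norm_nonneg _)
    · -- x = true, y = false : V true (false::t) = (star T * star T) * V false t
      have he : V T true (false :: t) = (star T * star T) * V T false t := by
        simp [V, W, mul_assoc]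
      rw [he]
      simp only [C, if_neg (by simp : (true : Bool) ≠ false)]
      calc ‖(star T * star T) * V T false t‖ ≤ ‖star T * star T‖ * ‖V T false t‖ :=
            norm_mul_le _ _
      _ ≤ ‖T * T‖ * C T false t := by
          rw [hBB]; exact mul_le_mul_of_nonneg_left (ih false) (norm_nonneg _)
    · -- x = true, y = true : V true (true::t) = (star T * T) * V true t
      have he : V T true (true :: t) = (star T * T) * V T true t := by
        simp [V, W, mul_assoc]
      rw [he]
      simp only [C, if_pos rfl]
      calc ‖(star T * T) * V T true t‖ ≤ ‖star T * T‖ * ‖V T true t‖ := norm_mul_le _ _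
      _ ≤ ‖T‖ ^ 2 * C T true t := mul_le_mul hB (ih true) (norm_nonneg _) (by positivity)

lemma norm_W_le (x : Bool) (l : List Bool) : ‖W T (x :: l)‖ ≤ ‖T‖ * C T x l := by
  have h1 : W T (x :: l) = (if x then T else star T) * V T x l := by
    cases x <;> simp [V, W, mul_assoc]
  rw [h1]
  calc ‖(if x then T else star T) * V T x l‖ ≤ ‖(if x then T else star T)‖ * ‖V T x l‖ :=
        norm_mul_le _ _
  _ ≤ ‖T‖ * C T x l := by
      apply mul_le_mul _ (norm_V_le T l x) (norm_nonneg _) (norm_nonneg _)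
      cases x <;> simp [norm_star]

lemma sum_C (n : ℕ) (x : Bool) :
    ∑ g : Fin n → Bool, C T x (List.ofFn g) = ‖T‖ * (‖T‖ ^ 2 + ‖T * T‖) ^ n := by
  induction n generalizing x with
  | zero => simp [C]
  | succ n ih =>
    rw [← (Fin.consEquiv (fun _ : Fin (n+1) => Bool)).sum_comp (fun g => C T x (List.ofFn g))]
    have hofn : ∀ (x' : Bool) (g : Fin n → Bool),
        List.ofFn (Fin.cons x' g : Fin (n+1) → Bool) = x' :: List.ofFn g := by
      intro x' g
      rw [List.ofFn_succ]
      simp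
    have : ∀ p : Bool × (Fin n → Bool),
        C T x (List.ofFn ((Fin.consEquiv (fun _ : Fin (n+1) => Bool)) p)) =
          (if x = p.1 then ‖T‖ ^ 2 else ‖T * T‖) * C T p.1 (List.ofFn p.2) := by
      rintro ⟨x', g⟩
      have he' : (Fin.consEquiv (fun _ : Fin (n+1) => Bool)) ⟨x', g⟩ =
          (Fin.cons x' g : Fin (n+1) → Bool) := by
        simp [Fin.consEquiv]
      rw [he', hofn]
      rfl
    rw [Fintype.sum_congr _ _ this, Fintype.sum_prod_type]
    rw [Fintype.sum_bool]
    cases x <;> norm_num [← Finset.mul_sum, ih] <;> ring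


lemma expand_pow (n : ℕ) :
    (T * star T + star T * T) ^ n = ∑ g : Fin n → Bool, W T (List.ofFn g) := by
  induction n with
  | zero => simp [W]
  | succ n ih =>
    rw [← (Fin.consEquiv (fun _ : Fin (n+1) => Bool)).sum_comp (fun g => W T (List.ofFn g))]
    have hofn : ∀ (x' : Bool) (g : Fin n → Bool),
        List.ofFn (Fin.cons x' g : Fin (n+1) → Bool) = x' :: List.ofFn g := by
      intro x' g
      rw [List.ofFn_succ]
      simp
    have key : ∀ p : Bool × (Fin n → Bool),
        W T (List.ofFn ((Fin.consEquiv (fun _ : Fin (n+1) => Bool)) p)) =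
          (if p.1 then T * star T else star T * T) * W T (List.ofFn p.2) := by
      rintro ⟨x', g⟩
      have he' : (Fin.consEquiv (fun _ : Fin (n+1) => Bool)) ⟨x', g⟩ =
          (Fin.cons x' g : Fin (n+1) → Bool) := by
        simp [Fin.consEquiv]
      rw [he', hofn]
      rfl
    rw [Fintype.sum_congr _ _ key, Fintype.sum_prod_type, Fintype.sum_bool]
    norm_num [← Finset.mul_sum, ← ih]
    rw [pow_succ', add_mul]

lemma norm_pow_le (n : ℕ) :
    ‖(T * star T + star T * T) ^ (n + 1)‖ ≤
      2 * ‖T‖ ^ 2 * (‖T‖ ^ 2 + ‖T * T‖) ^ n := by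
  rw [expand_pow]
  calc ‖∑ g : Fin (n+1) → Bool, W T (List.ofFn g)‖
      ≤ ∑ g : Fin (n+1) → Bool, ‖W T (List.ofFn g)‖ := norm_sum_le _ _
    _ ≤ ∑ g : Fin (n+1) → Bool, ‖T‖ * C T (g 0) (List.ofFn (fun i => g i.succ)) := by
        apply Finset.sum_le_sum
        intro g _
        have : List.ofFn g = g 0 :: List.ofFn (fun i => g i.succ) := by
          rw [List.ofFn_succ]
        rw [this]
        exact norm_W_le T _ _
    _ = 2 * ‖T‖ ^ 2 * (‖T‖ ^ 2 + ‖T * T‖) ^ n := by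
        rw [← (Fin.consEquiv (fun _ : Fin (n+1) => Bool)).sum_comp
          (fun g => ‖T‖ * C T (g 0) (List.ofFn (fun i => g i.succ)))]
        have key : ∀ p : Bool × (Fin n → Bool),
            (fun (g : Fin (n+1) → Bool) => ‖T‖ * C T (g 0) (List.ofFn (fun i => g i.succ)))
              ((Fin.consEquiv (fun _ : Fin (n+1) => Bool)) p)
            = ‖T‖ * C T p.1 (List.ofFn p.2) := by
          rintro ⟨x', g⟩
          have he' : (Fin.consEquiv (fun _ : Fin (n+1) => Bool)) ⟨x', g⟩ =
              (Fin.cons x' g : Fin (n+1) → Bool) := by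
            simp [Fin.consEquiv]
          simp [he']
        rw [Fintype.sum_congr _ _ key, Fintype.sum_prod_type, Fintype.sum_bool]
        simp only [← Finset.mul_sum, sum_C]
        ring

/-- The key operator norm inequality `‖T T* + T* T‖ ≤ ‖T‖² + ‖T²‖`. -/
lemma norm_AB_le : ‖T * star T + star T * T‖ ≤ ‖T‖ ^ 2 + ‖T * T‖ := by
  set S : H →L[ℂ] H := T * star T + star T * T with hS
  have hsa : IsSelfAdjoint S := by
    rw [hS]
    simp [IsSelfAdjoint, star_add, star_mul, star_star, add_comm]
  -- ‖S‖ ^ (2 ^ k) = ‖S ^ (2 ^ k)‖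
  have hpow : ∀ k : ℕ, ‖S‖ ^ (2 ^ k) = ‖S ^ (2 ^ k)‖ := by
    intro k
    induction k with
    | zero => simp
    | succ k ih =>
      have hsa' : IsSelfAdjoint (S ^ (2 ^ k)) := hsa.pow _
      have h2 : (2:ℕ) ^ (k+1) = 2 ^ k + 2 ^ k := by ring
      have key : ‖S ^ (2 ^ k)‖ * ‖S ^ (2 ^ k)‖ = ‖S ^ (2 ^ (k+1))‖ := by
        calc ‖S ^ (2 ^ k)‖ * ‖S ^ (2 ^ k)‖ = ‖star (S ^ (2 ^ k)) * S ^ (2 ^ k)‖ :=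
              (CStarRing.norm_star_mul_self).symm
        _ = ‖S ^ (2 ^ (k+1))‖ := by rw [hsa'.star_eq, ← pow_add, ← h2]
      calc ‖S‖ ^ 2 ^ (k+1) = (‖S‖ ^ 2 ^ k) * (‖S‖ ^ 2 ^ k) := by rw [h2, pow_add]
        _ = ‖S ^ 2 ^ k‖ * ‖S ^ 2 ^ k‖ := by rw [ih]
        _ = ‖S ^ 2 ^ (k+1)‖ := key
  by_cases hT : ‖T‖ ^ 2 + ‖T * T‖ = 0
  · have hT0 : T = 0 := by
      have h1 : ‖T‖ ^ 2 = 0 := by nlinarith [norm_nonneg (T * T), norm_nonneg T, sq_nonneg ‖T‖]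
      have : ‖T‖ = 0 := by nlinarith
      exact norm_eq_zero.mp this
    simp [hS, hT0]
  · set c : ℝ := ‖T‖ ^ 2 + ‖T * T‖ with hc
    have hc0 : 0 < c := by
      rcases lt_or_eq_of_le (by positivity : (0:ℝ) ≤ c) with h | h
      · exact h
      · exact absurd h.symm hT
    by_contra hcon
    push_neg at hcon
    have hq : 1 < ‖S‖ / c := (one_lt_div hc0).2 hcon
    obtain ⟨n, hn⟩ := pow_unbounded_of_one_lt (2 * ‖T‖ ^ 2 / c) hq
    have h2n : (‖S‖ / c) ^ n ≤ (‖S‖ / c) ^ (2 ^ n) :=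
      pow_le_pow_right₀ hq.le (Nat.lt_two_pow_self (n := n)).le
    have hkey : (‖S‖ / c) ^ (2 ^ n) ≤ 2 * ‖T‖ ^ 2 / c := by
      have h1 : ‖S‖ ^ (2 ^ n) ≤ 2 * ‖T‖ ^ 2 * c ^ (2 ^ n - 1) := by
        rw [hpow n]
        have := norm_pow_le T (2 ^ n - 1)
        rwa [Nat.sub_add_cancel (Nat.one_le_two_pow)] at this
      rw [div_pow, div_le_div_iff₀ (by positivity) hc0]
      calc ‖S‖ ^ 2 ^ n * c ≤ 2 * ‖T‖ ^ 2 * c ^ (2 ^ n - 1) * c := by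
            exact mul_le_mul_of_nonneg_right h1 hc0.le
        _ = 2 * ‖T‖ ^ 2 * c ^ (2 ^ n) := by
            rw [mul_assoc, ← pow_succ, Nat.sub_add_cancel (Nat.one_le_two_pow)]
    linarith [le_trans h2n hkey]


/-- The pointwise Kittaneh bound: `|⟨Tx,x⟩| ≤ (‖T‖ + ‖T²‖^{1/2})/2` for unit `x`. -/
lemma inner_le (x : H) (hx : ‖x‖ = 1) :
    ‖(⟪T x, x⟫_ℂ)‖ ≤ (‖T‖ + Real.sqrt ‖T * T‖) / 2 := by
  set a : ℝ := ‖T‖ with ha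
  set b : ℝ := Real.sqrt ‖T * T‖ with hb
  have ha0 : 0 ≤ a := norm_nonneg _
  have hb0 : 0 ≤ b := Real.sqrt_nonneg _
  have hb2 : b ^ 2 = ‖T * T‖ := Real.sq_sqrt (norm_nonneg _)
  have hba : b ≤ a := by
    have h1 : ‖T * T‖ ≤ a * a := norm_mul_le T T
    calc b ≤ Real.sqrt (a * a) := Real.sqrt_le_sqrt h1
    _ = a := by rw [Real.sqrt_mul_self ha0]
  set lam : ℂ := ⟪T x, x⟫_ℂ with hlam
  by_cases hl : lam = 0
  · rw [hl]
    simp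
    positivity
  set r : ℝ := ‖lam‖ with hr
  have hr0 : 0 < r := norm_pos_iff.mpr hl
  set u : ℂ := lam / (r : ℂ) with hu
  have hrne : (r : ℂ) ≠ 0 := by
    exact_mod_cast ne_of_gt hr0
  have hu1 : ‖u‖ = 1 := by
    rw [hu, norm_div, Complex.norm_real, Real.norm_eq_abs, abs_of_pos hr0]
    exact div_self (ne_of_gt hr0)
  have huu : u * (starRingEnd ℂ) u = 1 := by
    rw [Complex.mul_conj']
    norm_cast
    rw [hu1]
    norm_num
  have huu' : (starRingEnd ℂ) u * u = 1 := by rw [mul_comm]; exact huu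
  have hconj : (starRingEnd ℂ) u * lam = (r : ℂ) := by
    have habs : ((‖lam‖ : ℝ) : ℂ) ≠ 0 := by
      rw [← hr]
      exact hrne
    rw [hu, map_div₀, Complex.conj_ofReal]
    rw [div_mul_eq_mul_div, Complex.conj_mul']
    push_cast
    rw [hr]
    rw [sq, mul_div_assoc, div_self habs, mul_one]
  have hconj2 : u * (starRingEnd ℂ) lam = (r : ℂ) := by
    have h := congrArg (starRingEnd ℂ) hconj
    rw [map_mul, Complex.conj_conj, Complex.conj_ofReal] at h
    exact h
  set R : H →L[ℂ] H := u • T + ((starRingEnd ℂ) u) • (star T) with hR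
  have hinner : ⟪R x, x⟫_ℂ = 2 * (r : ℂ) := by
    have h1 : R x = u • T x + (starRingEnd ℂ) u • (star T) x := rfl
    have h2 : ⟪(star T) x, x⟫_ℂ = (starRingEnd ℂ) lam := by
      rw [ContinuousLinearMap.star_eq_adjoint, ContinuousLinearMap.adjoint_inner_left]
      exact (inner_conj_symm x (T x)).symm
    rw [h1, inner_add_left, inner_smul_left, inner_smul_left, h2, ← hlam,
      Complex.conj_conj, hconj, hconj2]
    ring
  have hnorm : 2 * r ≤ ‖R‖ := by
    have h3 : ‖⟪R x, x⟫_ℂ‖ ≤ ‖R x‖ * ‖x‖ := norm_inner_le_norm _ _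
    have h4 : ‖R x‖ ≤ ‖R‖ * ‖x‖ := R.le_opNorm x
    have h5 : ‖⟪R x, x⟫_ℂ‖ = 2 * r := by
      have hcast : (2 * (r:ℂ)) = ((2*r : ℝ) : ℂ) := by push_cast; ring
      rw [hinner, hcast, Complex.norm_real, Real.norm_eq_abs, abs_of_pos (by linarith)]
    rw [hx, mul_one] at h3 h4
    linarith [h5 ▸ h3]
  have hRsa : IsSelfAdjoint R := by
    rw [IsSelfAdjoint, hR, star_add, star_smul, star_smul, star_star]
    show (starRingEnd ℂ) u • star T + (starRingEnd ℂ) ((starRingEnd ℂ) u) • T = _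
    rw [Complex.conj_conj]
    exact add_comm _ _
  have hRR : R * R = (u * u) • (T * T) + ((T * star T + star T * T)
      + ((starRingEnd ℂ) u * (starRingEnd ℂ) u) • (star (T * T))) := by
    rw [hR]
    rw [add_mul, mul_add, mul_add]
    simp only [smul_mul_assoc, mul_smul_comm, smul_smul]
    rw [huu, huu', one_smul, one_smul]
    rw [star_mul]
    abel
  have hRnorm : ‖R‖ * ‖R‖ ≤ a ^ 2 + 3 * b ^ 2 := by
    have h6 : ‖R‖ * ‖R‖ = ‖R * R‖ := by
      have h6' := CStarRing.norm_star_mul_self (x := R)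
      rw [hRsa.star_eq] at h6'
      exact h6'.symm
    rw [h6, hRR]
    have e1 : ‖(u * u) • (T * T)‖ = b ^ 2 := by
      rw [norm_smul, norm_mul, hu1, hb2]
      ring
    have e2 : ‖((starRingEnd ℂ) u * (starRingEnd ℂ) u) • (star (T * T))‖ = b ^ 2 := by
      rw [norm_smul, norm_mul, norm_star, RCLike.norm_conj, hu1, hb2]
      ring
    have e3 : ‖T * star T + star T * T‖ ≤ a ^ 2 + b ^ 2 := by
      rw [ha, hb2]
      exact norm_AB_le T
    calc ‖(u * u) • (T * T) + ((T * star T + star T * T)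
          + ((starRingEnd ℂ) u * (starRingEnd ℂ) u) • (star (T * T)))‖
        ≤ ‖(u * u) • (T * T)‖ + ‖(T * star T + star T * T)
          + ((starRingEnd ℂ) u * (starRingEnd ℂ) u) • (star (T * T))‖ := norm_add_le _ _
      _ ≤ ‖(u * u) • (T * T)‖ + (‖T * star T + star T * T‖
          + ‖((starRingEnd ℂ) u * (starRingEnd ℂ) u) • (star (T * T))‖) := by
          gcongr
          exact norm_add_le _ _
      _ ≤ a ^ 2 + 3 * b ^ 2 := by rw [e1, e2]; linarith
  have hfin : (2 * r) ^ 2 ≤ (a + b) ^ 2 := by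
    have h7 : (2 * r) ^ 2 ≤ ‖R‖ * ‖R‖ := by nlinarith [hnorm, hr0, norm_nonneg R]
    nlinarith [hba, hb0]
  nlinarith [hfin, hr0, ha0, hb0]

end KittanehAux

theorem stmt4 (T : H →L[ℂ] H) :
    numRad T ≤
      Real.log ((1 / 2) * Real.exp ‖T‖ + (1 / 2) * Real.exp (Real.sqrt ‖T * T‖)) ∧
    Real.log ((1 / 2) * Real.exp ‖T‖ + (1 / 2) * Real.exp (Real.sqrt ‖T * T‖)) ≤
      ‖T‖ := by
  set a := ‖T‖ with ha
  set b := Real.sqrt ‖T * T‖ with hb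
  have ha0 : 0 ≤ a := norm_nonneg _
  have hb0 : 0 ≤ b := Real.sqrt_nonneg _
  have hba : b ≤ a := by
    have h1 : ‖T * T‖ ≤ a * a := norm_mul_le T T
    calc b ≤ Real.sqrt (a * a) := Real.sqrt_le_sqrt h1
    _ = a := Real.sqrt_mul_self ha0
  set E := (1 / 2) * Real.exp a + (1 / 2) * Real.exp b with hE
  have hE0 : 0 < E := by positivity
  have hlog2 : Real.log E ≤ a := by
    rw [Real.log_le_iff_le_exp hE0]
    have := Real.exp_le_exp.2 hba
    rw [hE]
    linarith
  have hlog1 : (a + b) / 2 ≤ Real.log E := by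
    rw [Real.le_log_iff_exp_le hE0]
    have e1 : Real.exp (a/2) * Real.exp (a/2) = Real.exp a := by
      rw [← Real.exp_add]; congr 1; ring
    have e2 : Real.exp (b/2) * Real.exp (b/2) = Real.exp b := by
      rw [← Real.exp_add]; congr 1; ring
    have e3 : Real.exp (a/2) * Real.exp (b/2) = Real.exp ((a+b)/2) := by
      rw [← Real.exp_add]; congr 1; ring
    rw [hE]
    nlinarith [sq_nonneg (Real.exp (a/2) - Real.exp (b/2)), Real.exp_pos (a/2),
      Real.exp_pos (b/2)]
  have hnum : numRad T ≤ (a + b) / 2 := by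
    rw [numRad]
    cases isEmpty_or_nonempty {x : H // ‖x‖ = 1} with
    | inl h =>
      haveI := h
      rw [Real.iSup_of_isEmpty]
      positivity
    | inr h =>
      apply ciSup_le
      rintro ⟨x, hx⟩
      exact KittanehAux.inner_le T x hx
  exact ⟨hnum.trans hlog1, hlog2⟩
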